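/- For the cuboctahedron graph with one-particle Hamiltonian h = -Δ, the uniform two-particle ensemble density ρ̄ = (1/6)(1,…,1) ∈ ℝ¹² is not the density of any pure ground state: there exist no complex coefficients c₁,c₂,c₃ with |c₁|²+|c₂|²+|c₃|² = 1 such that the state Ψ = φ₀ ∧ (c₁φ₁ + c₂φ₂ + c₃φ₃) has density ρ̄, where φ₀ = (1/√12)(1,…,1), φ₁ = (1/√8)(-1,-1,-1,-1,1,1,1,1,0,0,0,0), φ₂ = (1/4)(1,-1,-1,1,1,-1,-1,1,0,-2,0,2), φ₃ = (1/4)(-1,-1,1,1,-1,-1,1,1,-2,0,2,0). Equivalently, the system |√2 c₁ ± c₂ ± c₃|² = 4/3 (all four sign choices), |c₂|² = |c₃|² = 1/3 has no solution. -/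

import Mathlib

open scoped BigOperators

noncomputable def phi0 : Fin 12 → ℝ := fun _ => 1 / Real.sqrt 12

noncomputable def phi1 : Fin 12 → ℝ :=
  fun i => (1 / Real.sqrt 8) * ![-1, -1, -1, -1, 1, 1, 1, 1, 0, 0, 0, 0] i

noncomputable def phi2 : Fin 12 → ℝ :=
  fun i => (1 / 4 : ℝ) * ![1, -1, -1, 1, 1, -1, -1, 1, 0, -2, 0, 2] i

noncomputable def phi3 : Fin 12 → ℝ :=
  fun i => (1 / 4 : ℝ) * ![-1, -1, 1, 1, -1, -1, 1, 1, -2, 0, 2, 0] i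

/-- Real-variable core of the inconsistency: viewing `√2c₁, c₂, c₃` as vectors
`(u,v), (p,q), (r,t)` in ℝ², the six equations force them to be pairwise orthogonal
and nonzero, impossible in the plane. -/
lemma cubocta_core (u v p q r t : ℝ)
    (h1 : (u+p+r)^2+(v+q+t)^2 = 4/3)
    (h2 : (u+p-r)^2+(v+q-t)^2 = 4/3)
    (h3 : (u-p+r)^2+(v-q+t)^2 = 4/3)
    (h4 : (u-p-r)^2+(v-q-t)^2 = 4/3)
    (h5 : p^2+q^2 = 1/3)
    (h6 : r^2+t^2 = 1/3) : False := by
  have e1 : u*p+v*q = 0 := by linear_combination (h1+h2-h3-h4)/8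
  have e2 : u*r+v*t = 0 := by linear_combination (h1-h2+h3-h4)/8
  have e3 : p*r+q*t = 0 := by linear_combination (h1-h2-h3+h4)/8
  have e4 : u^2+v^2 = 2/3 := by linear_combination (h1+h2+h3+h4)/4 - h5 - h6
  have f3 : (u*q-v*p)*(u*t-v*r) = 0 := by
    linear_combination (u^2+v^2) * e3 - (u*r+v*t) * e1
  have f1 : (u*q-v*p)^2 = 2/9 := by
    linear_combination (p^2+q^2)*e4 + (2/3)*h5 - (u*p+v*q)*e1
  have f2 : (u*t-v*r)^2 = 2/9 := by
    linear_combination (r^2+t^2)*e4 + (2/3)*h6 - (u*r+v*t)*e2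
  rcases mul_eq_zero.mp f3 with h | h
  · rw [h] at f1; norm_num at f1
  · rw [h] at f2; norm_num at f2

/-- Complex form of the core inconsistency. -/
lemma cubocta_keyC (c₁ c₂ c₃ : ℂ)
    (h1 : Complex.normSq (Real.sqrt 2 * c₁ + c₂ + c₃) = 4 / 3)
    (h2 : Complex.normSq (Real.sqrt 2 * c₁ + c₂ - c₃) = 4 / 3)
    (h3 : Complex.normSq (Real.sqrt 2 * c₁ - c₂ + c₃) = 4 / 3)
    (h4 : Complex.normSq (Real.sqrt 2 * c₁ - c₂ - c₃) = 4 / 3)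
    (h5 : Complex.normSq c₂ = 1 / 3)
    (h6 : Complex.normSq c₃ = 1 / 3) : False := by
  simp only [Complex.normSq_apply, Complex.add_re, Complex.add_im, Complex.sub_re,
    Complex.sub_im, Complex.mul_re, Complex.mul_im, Complex.ofReal_re,
    Complex.ofReal_im] at h1 h2 h3 h4 h5 h6
  exact cubocta_core (Real.sqrt 2 * c₁.re) (Real.sqrt 2 * c₁.im) c₂.re c₂.im c₃.re c₃.im
    (by linear_combination h1) (by linear_combination h2) (by linear_combination h3)
    (by linear_combination h4) (by linear_combination h5) (by linear_combination h6)

/-- For the cuboctahedron graph, the uniform two-particle ensemble density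
`ρ̄ = (1/6)(1,…,1)` is not the density of any pure ground state
`Ψ = φ₀ ∧ (c₁φ₁ + c₂φ₂ + c₃φ₃)` with `|c₁|²+|c₂|²+|c₃|² = 1`: the density of such a state,
`ρ_i = |φ₀ᵢ|² + |c₁φ₁ᵢ + c₂φ₂ᵢ + c₃φ₃ᵢ|²`, can never equal `1/6` at every vertex. -/
theorem cuboctahedron_not_pure_state_v_representable :
    (¬ ∃ c₁ c₂ c₃ : ℂ,
      Complex.normSq c₁ + Complex.normSq c₂ + Complex.normSq c₃ = 1 ∧
      ∀ i : Fin 12,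
        (phi0 i) ^ 2 +
          Complex.normSq (c₁ * (phi1 i : ℂ) + c₂ * (phi2 i : ℂ) + c₃ * (phi3 i : ℂ)) =
        1 / 6) ∧
    ¬ ∃ c₁ c₂ c₃ : ℂ,
      Complex.normSq (Real.sqrt 2 * c₁ + c₂ + c₃) = 4 / 3 ∧
      Complex.normSq (Real.sqrt 2 * c₁ + c₂ - c₃) = 4 / 3 ∧
      Complex.normSq (Real.sqrt 2 * c₁ - c₂ + c₃) = 4 / 3 ∧
      Complex.normSq (Real.sqrt 2 * c₁ - c₂ - c₃) = 4 / 3 ∧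
      Complex.normSq c₂ = 1 / 3 ∧ Complex.normSq c₃ = 1 / 3 := by
  constructor
  · rintro ⟨c₁, c₂, c₃, -, h⟩
    have s8 : Real.sqrt 8 = 2 * Real.sqrt 2 := by
      rw [show (8:ℝ) = 2^2*2 by norm_num, Real.sqrt_mul (by positivity),
        Real.sqrt_sq (by norm_num)]
    have e8 : (1:ℝ) / Real.sqrt 8 = Real.sqrt 2 / 4 := by
      rw [s8, div_eq_div_iff (by positivity) (by norm_num)]
      linarith [Real.mul_self_sqrt (by norm_num : (0:ℝ) ≤ 2)]
    have p0 : ∀ i : Fin 12, phi0 i ^ 2 = 1/12 := fun i => by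
      simp [phi0, div_pow, Real.sq_sqrt (by norm_num : (0:ℝ) ≤ 12)]
    have nquarter : Complex.normSq (-(1/4) : ℂ) = 1/16 := by
      simp [Complex.normSq_apply]; norm_num
    -- helper to extract each equation
    have key : ∀ i : Fin 12, ∀ z : ℂ,
        (c₁ * (phi1 i : ℂ) + c₂ * (phi2 i : ℂ) + c₃ * (phi3 i : ℂ)) = (-(1/4) : ℂ) * z →
        Complex.normSq z = 4/3 := by
      intro i z hz
      have hi := h i
      rw [p0, hz, Complex.normSq_mul, nquarter] at hi
      linarith
    -- vertex 8 and 9 give |c₃|² = |c₂|² = 1/3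
    have i8 : (8 : Fin 12) = ⟨8, by norm_num⟩ := rfl
    have i9 : (9 : Fin 12) = ⟨9, by norm_num⟩ := rfl
    have hc3 : Complex.normSq c₃ = 1/3 := by
      have hi := h 8
      rw [p0] at hi
      have hz : (c₁ * (phi1 8 : ℂ) + c₂ * (phi2 8 : ℂ) + c₃ * (phi3 8 : ℂ))
          = (-(1/2) : ℂ) * c₃ := by
        rw [show phi1 8 = 0 by rw [i8]; norm_num [phi1, Matrix.cons_val_succ, Fin.succ],
            show phi2 8 = 0 by rw [i8]; norm_num [phi2, Matrix.cons_val_succ, Fin.succ],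
            show phi3 8 = -(1/2) by rw [i8]; norm_num [phi3, Matrix.cons_val_succ, Fin.succ]]
        push_cast; ring
      rw [hz, Complex.normSq_mul] at hi
      have : Complex.normSq (-(1/2) : ℂ) = 1/4 := by simp [Complex.normSq_apply]; norm_num
      rw [this] at hi; linarith
    have hc2 : Complex.normSq c₂ = 1/3 := by
      have hi := h 9
      rw [p0] at hi
      have hz : (c₁ * (phi1 9 : ℂ) + c₂ * (phi2 9 : ℂ) + c₃ * (phi3 9 : ℂ))
          = (-(1/2) : ℂ) * c₂ := by
        rw [show phi1 9 = 0 by rw [i9]; norm_num [phi1, Matrix.cons_val_succ, Fin.succ],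
            show phi2 9 = -(1/2) by rw [i9]; norm_num [phi2, Matrix.cons_val_succ, Fin.succ],
            show phi3 9 = 0 by rw [i9]; norm_num [phi3, Matrix.cons_val_succ, Fin.succ]]
        push_cast; ring
      rw [hz, Complex.normSq_mul] at hi
      have : Complex.normSq (-(1/2) : ℂ) = 1/4 := by simp [Complex.normSq_apply]; norm_num
      rw [this] at hi; linarith
    have g1 : Complex.normSq (Real.sqrt 2 * c₁ + c₂ + c₃) = 4/3 := by
      refine key 1 _ ?_
      rw [show phi1 1 = -(Real.sqrt 2/4) by rw [show phi1 1 = (1/Real.sqrt 8) * (-1) from rfl, e8]; ring,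
          show phi2 1 = -(1/4) from by norm_num [phi2],
          show phi3 1 = -(1/4) from by norm_num [phi3]]
      push_cast; ring
    have g2 : Complex.normSq (Real.sqrt 2 * c₁ + c₂ - c₃) = 4/3 := by
      refine key 2 _ ?_
      rw [show phi1 2 = -(Real.sqrt 2/4) by rw [show phi1 2 = (1/Real.sqrt 8) * (-1) from rfl, e8]; ring,
          show phi2 2 = -(1/4) from by norm_num [phi2, show ![(1:ℝ), -1, -1, 1, 1, -1, -1, 1, 0, -2, 0, 2] 2 = -1 from rfl],
          show phi3 2 = (1/4) from by norm_num [phi3, show ![(-1:ℝ), -1, 1, 1, -1, -1, 1, 1, -2, 0, 2, 0] 2 = 1 from rfl]]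
      push_cast; ring
    have g3 : Complex.normSq (Real.sqrt 2 * c₁ - c₂ + c₃) = 4/3 := by
      refine key 0 _ ?_
      rw [show phi1 0 = -(Real.sqrt 2/4) by rw [show phi1 0 = (1/Real.sqrt 8) * (-1) from rfl, e8]; ring,
          show phi2 0 = (1/4) from by norm_num [phi2],
          show phi3 0 = -(1/4) from by norm_num [phi3]]
      push_cast; ring
    have g4 : Complex.normSq (Real.sqrt 2 * c₁ - c₂ - c₃) = 4/3 := by
      refine key 3 _ ?_
      rw [show phi1 3 = -(Real.sqrt 2/4) by rw [show phi1 3 = (1/Real.sqrt 8) * (-1) from rfl, e8]; ring,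
          show phi2 3 = (1/4) from by norm_num [phi2, show ![(1:ℝ), -1, -1, 1, 1, -1, -1, 1, 0, -2, 0, 2] 3 = 1 from rfl],
          show phi3 3 = (1/4) from by norm_num [phi3, show ![(-1:ℝ), -1, 1, 1, -1, -1, 1, 1, -2, 0, 2, 0] 3 = 1 from rfl]]
      push_cast; ring
    exact cubocta_keyC c₁ c₂ c₃ g1 g2 g3 g4 hc2 hc3
  · rintro ⟨c₁, c₂, c₃, h1, h2, h3, h4, h5, h6⟩
    exact cubocta_keyC c₁ c₂ c₃ h1 h2 h3 h4 h5 h6
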